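/- Fix h > 0, t > 0, and a positive integer D. Let G : ℝ^D → ℝ be Lipschitz continuous with Lipschitz constant L (i.e., |G(x) − G(y)| ≤ L·‖x − y‖ for all x, y, with ‖·‖ the Euclidean norm), and let f : ℝ → ℝ^D be piecewise constant and right-continuous on [0, t]: there exist points 0 = t₀ < t₁ < … < t_N = t and values c₀, …, c_N ∈ ℝ^D such that f(s) = c_k for s ∈ [t_k, t_{k+1}) (k = 0, …, N − 1) and f(t) = c_N. Then |∫₀ᵗ σ_h(s)·G(f(s)) ds| ≤ (h/2)·|G(f(t))| + (h/2)·L·∑_{k=1}^{N} ‖c_k − c_{k−1}‖. Moreover, if t is an integer multiple of h, then the first term can be dropped. -/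

import Mathlib

open MeasureTheory

/-- The split-step kernel `σ_h(t) = 1 − 2·(⌊t/(h/2)⌋ mod 2)`: a piecewise constant
right-continuous function taking only the values `+1` and `−1`, switching value at
integer multiples of `h/2`. -/
noncomputable def splitKernel (h t : ℝ) : ℝ := 1 - 2 * ((⌊t / (h / 2)⌋ % 2 : ℤ) : ℝ)

lemma splitKernel_measurable (h : ℝ) : Measurable (splitKernel h) := by
  have : Measurable fun u : ℝ => ((⌊u / (h / 2)⌋ % 2 : ℤ) : ℝ) :=
    (measurable_of_countable fun z : ℤ => ((z % 2 : ℤ) : ℝ)).comp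
      (Int.measurable_floor.comp (measurable_id.div_const _))
  exact measurable_const.sub (this.const_mul 2)

lemma splitKernel_abs_le (h u : ℝ) : |splitKernel h u| ≤ 1 := by
  unfold splitKernel
  rcases Int.emod_two_eq_zero_or_one (⌊u / (h / 2)⌋) with h2 | h2 <;> rw [h2] <;> norm_num

lemma splitKernel_intervalIntegrable (h a b : ℝ) :
    IntervalIntegrable (splitKernel h) volume a b := by
  rw [intervalIntegrable_iff]
  refine Measure.integrableOn_of_bounded (M := 1) ?_ ((splitKernel_measurable h).aestronglyMeasurable) ?_
  · exact measure_Ioc_lt_top.ne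
  · filter_upwards with x
    rw [Real.norm_eq_abs]; exact splitKernel_abs_le h x

lemma splitKernel_eq_on (h : ℝ) (hh : 0 < h) (m : ℤ) (u : ℝ)
    (hu : u ∈ Set.Ico ((m : ℝ) * (h / 2)) ((m + 1 : ℝ) * (h / 2))) :
    splitKernel h u = 1 - 2 * ((m % 2 : ℤ) : ℝ) := by
  have e2 : (0:ℝ) < h / 2 := by linarith
  have hm : ⌊u / (h / 2)⌋ = m := by
    rw [Int.floor_eq_iff]
    constructor
    · rw [le_div_iff₀ e2]; exact hu.1
    · rw [div_lt_iff₀ e2]; exact hu.2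
  unfold splitKernel
  rw [hm]

lemma splitKernel_integral_step (h : ℝ) (hh : 0 < h) (m : ℤ) :
    ∫ u in ((m:ℝ) * (h/2))..((m+1:ℝ) * (h/2)), splitKernel h u
      = (1 - 2 * ((m % 2 : ℤ) : ℝ)) * (h/2) := by
  have e2 : (0:ℝ) < h / 2 := by linarith
  have hab : (m:ℝ) * (h/2) < (m+1:ℝ) * (h/2) := by nlinarith
  rw [intervalIntegral.integral_congr_ae (g := fun _ => 1 - 2 * ((m % 2 : ℤ) : ℝ)) ?_]
  · rw [intervalIntegral.integral_const, smul_eq_mul]; ring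
  · have hb : ∀ᵐ x : ℝ, x ≠ (m+1:ℝ) * (h/2) := by
      rw [ae_iff]
      simpa using measure_singleton ((m+1:ℝ) * (h/2))
    filter_upwards [hb] with x hx hxI
    rw [Set.uIoc_of_le hab.le] at hxI
    exact splitKernel_eq_on h hh m x ⟨hxI.1.le, lt_of_le_of_ne hxI.2 hx⟩

lemma splitKernel_F_nat (h : ℝ) (hh : 0 < h) (m : ℕ) :
    ∫ u in (0:ℝ)..((m:ℝ) * (h/2)), splitKernel h u = if Even m then 0 else h/2 := by
  induction m with
  | zero => simp
  | succ n ih =>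
    have key : ∫ u in ((n:ℝ) * (h/2))..((n+1:ℝ) * (h/2)), splitKernel h u
        = (1 - 2 * (((n:ℤ) % 2 : ℤ) : ℝ)) * (h/2) := by
      have := splitKernel_integral_step h hh (n : ℤ)
      push_cast at this ⊢
      exact this
    have hadd := intervalIntegral.integral_add_adjacent_intervals
      (a := (0:ℝ)) (b := (n:ℝ) * (h/2)) (c := (n+1:ℝ) * (h/2))
      (f := splitKernel h) (μ := volume)
      (splitKernel_intervalIntegrable h _ _) (splitKernel_intervalIntegrable h _ _)
    have hcast : ((n+1 : ℕ) : ℝ) = (n:ℝ) + 1 := by push_cast; ring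
    rw [hcast, ← hadd, ih, key]
    rcases Nat.even_or_odd n with he | ho
    · have h1 : ((n:ℤ) % 2) = 0 := by
        obtain ⟨k, hk⟩ := he; subst hk; push_cast; omega
      have h2 : ¬ Even (n+1) := by simp [Nat.even_add_one, he]
      rw [if_pos he, if_neg h2, h1]
      push_cast; ring
    · have he : ¬ Even n := Nat.not_even_iff_odd.mpr ho
      have h1 : ((n:ℤ) % 2) = 1 := by
        obtain ⟨k, hk⟩ := ho; subst hk; push_cast; omega
      have h2 : Even (n+1) := Nat.even_add_one.mpr he
      rw [if_neg he, if_pos h2, h1]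
      push_cast; ring

lemma splitKernel_F_bounds (h : ℝ) (hh : 0 < h) (s : ℝ) (hs : 0 ≤ s) :
    0 ≤ (∫ u in (0:ℝ)..s, splitKernel h u) ∧ (∫ u in (0:ℝ)..s, splitKernel h u) ≤ h/2 := by
  have e2 : (0:ℝ) < h / 2 := by linarith
  set m : ℕ := (⌊s / (h/2)⌋).toNat with hm
  have hfl : (⌊s / (h/2)⌋ : ℤ) = (m : ℤ) := by
    rw [hm, Int.toNat_of_nonneg (Int.floor_nonneg.mpr (div_nonneg hs e2.le))]
  have hmem : s ∈ Set.Ico ((m:ℝ) * (h/2)) ((m+1:ℝ) * (h/2)) := by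
    constructor
    · have := Int.floor_le (s / (h/2))
      rw [hfl] at this; push_cast at this
      calc (m:ℝ) * (h/2) ≤ (s / (h/2)) * (h/2) := by nlinarith
        _ = s := by field_simp
    · have := Int.lt_floor_add_one (s / (h/2))
      rw [hfl] at this; push_cast at this
      calc s = (s / (h/2)) * (h/2) := by field_simp
        _ < ((m:ℝ)+1) * (h/2) := by nlinarith
  have hle : (m:ℝ) * (h/2) ≤ s := hmem.1
  have h2 : ∫ u in ((m:ℝ) * (h/2))..s, splitKernel h u
      = (1 - 2 * (((m:ℤ) % 2 : ℤ) : ℝ)) * (s - (m:ℝ) * (h/2)) := by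
    rw [intervalIntegral.integral_congr (g := fun _ => 1 - 2 * (((m:ℤ) % 2 : ℤ) : ℝ)) ?_]
    · rw [intervalIntegral.integral_const, smul_eq_mul]; ring
    · intro x hx
      rw [Set.uIcc_of_le hle] at hx
      refine splitKernel_eq_on h hh (m:ℤ) x ⟨?_, ?_⟩
      · push_cast; exact hx.1
      · push_cast; exact lt_of_le_of_lt hx.2 hmem.2
  have hadd := intervalIntegral.integral_add_adjacent_intervals
    (a := (0:ℝ)) (b := (m:ℝ) * (h/2)) (c := s) (f := splitKernel h) (μ := volume)
    (splitKernel_intervalIntegrable h _ _) (splitKernel_intervalIntegrable h _ _)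
  rw [← hadd, splitKernel_F_nat h hh m, h2]
  have hd1 : 0 ≤ s - (m:ℝ) * (h/2) := by linarith
  have hd2 : s - (m:ℝ) * (h/2) < h/2 := by
    have := hmem.2; push_cast at this; linarith
  rcases Nat.even_or_odd m with he | ho
  · have h1 : ((m:ℤ) % 2) = 0 := by
      obtain ⟨k, hk⟩ := he; rw [hk]; push_cast; omega
    rw [if_pos he, h1]
    push_cast
    constructor <;> nlinarith
  · have he : ¬ Even m := Nat.not_even_iff_odd.mpr ho
    have h1 : ((m:ℤ) % 2) = 1 := by
      obtain ⟨k, hk⟩ := ho; rw [hk]; push_cast; omega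
    rw [if_neg he, h1]
    push_cast
    constructor <;> nlinarith

lemma splitKernel_F_mul (h : ℝ) (hh : 0 < h) (n : ℕ) :
    (∫ u in (0:ℝ)..((n:ℝ) * h), splitKernel h u) = 0 := by
  have : (n:ℝ) * h = ((2*n : ℕ):ℝ) * (h/2) := by push_cast; ring
  rw [this, splitKernel_F_nat h hh (2*n), if_pos (even_two_mul n)]

/-- For `G : ℝ^D → ℝ` Lipschitz with constant `L` (Euclidean norm)
and a piecewise constant right-continuous `f : ℝ → ℝ^D` on `[0,t]` with jump points
`0 = t₀ < t₁ < … < t_N = t` and values `c₀, …, c_N`, one has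
`|∫₀ᵗ σ_h(s)·G(f(s)) ds| ≤ (h/2)·|G(f(t))| + (h/2)·L·∑_{k=1}^N ‖c_k − c_{k−1}‖`, and if
`t` is an integer multiple of `h` then the first term may be dropped. -/
theorem splitKernel_mul_lipschitz_piecewiseConst_integral_bound
    (h t : ℝ) (hh : 0 < h) (ht : 0 < t)
    (D : ℕ) (hD : 1 ≤ D)
    (G : EuclideanSpace ℝ (Fin D) → ℝ) (L : ℝ)
    (hG : ∀ x y : EuclideanSpace ℝ (Fin D), |G x - G y| ≤ L * ‖x - y‖)
    (N : ℕ) (tt : ℕ → ℝ) (c : ℕ → EuclideanSpace ℝ (Fin D))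
    (f : ℝ → EuclideanSpace ℝ (Fin D))
    (htt0 : tt 0 = 0) (httN : tt N = t)
    (htt : ∀ k < N, tt k < tt (k + 1))
    (hf : ∀ k < N, ∀ s ∈ Set.Ico (tt k) (tt (k + 1)), f s = c k)
    (hft : f t = c N) :
    |∫ s in (0:ℝ)..t, splitKernel h s * G (f s)| ≤
        h / 2 * |G (f t)| + h / 2 * L * ∑ k ∈ Finset.Icc 1 N, ‖c k - c (k - 1)‖ ∧
      ((∃ n : ℕ, t = n * h) →
        |∫ s in (0:ℝ)..t, splitKernel h s * G (f s)| ≤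
          h / 2 * L * ∑ k ∈ Finset.Icc 1 N, ‖c k - c (k - 1)‖) := by
  have e2 : (0:ℝ) < h / 2 := by linarith
  set F : ℝ → ℝ := fun s => ∫ u in (0:ℝ)..s, splitKernel h u with hFdef
  set A : ℕ → ℝ := fun n => F (tt n) with hAdef
  -- basic facts
  have hNpos : 0 < N := by
    rcases Nat.eq_zero_or_pos N with h0 | h0
    · exfalso; rw [h0, htt0] at httN; linarith
    · exact h0
  have httnn : ∀ k, k ≤ N → 0 ≤ tt k := by
    intro k hk
    induction k with
    | zero => rw [htt0]
    | succ n ih =>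
        exact le_of_lt (lt_of_le_of_lt (ih (Nat.le_of_succ_le hk))
          (htt n (Nat.lt_of_succ_le hk)))
  have hL : 0 ≤ L := by
    have hx := hG (EuclideanSpace.single (⟨0, hD⟩ : Fin D) (1:ℝ)) 0
    rw [sub_zero, EuclideanSpace.norm_single, norm_one, mul_one] at hx
    exact le_trans (abs_nonneg _) hx
  have hA0 : A 0 = 0 := by
    simp only [hAdef, hFdef, htt0, intervalIntegral.integral_same]
  have hAbound : ∀ n, n ≤ N → 0 ≤ A n ∧ A n ≤ h / 2 := fun n hn =>
    splitKernel_F_bounds h hh (tt n) (httnn n hn)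
  -- a.e. equality on each piece
  have hae : ∀ k < N, ∀ᵐ x : ℝ ∂volume, x ∈ Set.uIoc (tt k) (tt (k+1)) →
      splitKernel h x * G (f x) = splitKernel h x * G (c k) := by
    intro k hk
    have hb : ∀ᵐ x : ℝ, x ≠ tt (k+1) := by
      rw [ae_iff]; simpa using measure_singleton (tt (k+1))
    filter_upwards [hb] with x hx hxI
    rw [Set.uIoc_of_le (htt k hk).le] at hxI
    rw [hf k hk x ⟨hxI.1.le, lt_of_le_of_ne hxI.2 hx⟩]
  have hint : ∀ k < N, IntervalIntegrable (fun s => splitKernel h s * G (f s))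
      volume (tt k) (tt (k+1)) := by
    intro k hk
    refine ((splitKernel_intervalIntegrable h _ _).mul_const (G (c k))).congr_ae ?_
    have h1 := ae_restrict_mem (μ := volume) (measurableSet_uIoc (a := tt k) (b := tt (k+1)))
    have h2 := ae_restrict_of_ae (μ := volume) (s := Set.uIoc (tt k) (tt (k+1))) (hae k hk)
    filter_upwards [h1, h2] with x hx1 hx2
    exact (hx2 hx1).symm
  have hpiece : ∀ k < N, ∫ s in (tt k)..(tt (k+1)), splitKernel h s * G (f s)
      = G (c k) * (A (k+1) - A k) := by
    intro k hk
    rw [intervalIntegral.integral_congr_ae (hae k hk), intervalIntegral.integral_mul_const]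
    have hadd := intervalIntegral.integral_add_adjacent_intervals
      (a := (0:ℝ)) (b := tt k) (c := tt (k+1)) (f := splitKernel h) (μ := volume)
      (splitKernel_intervalIntegrable h _ _) (splitKernel_intervalIntegrable h _ _)
    have : ∫ s in (tt k)..(tt (k+1)), splitKernel h s = A (k+1) - A k := by
      simp only [hAdef, hFdef]; linarith
    rw [this]; ring
  -- sum over pieces
  have hsum : ∫ s in (0:ℝ)..t, splitKernel h s * G (f s)
      = ∑ k ∈ Finset.range N, G (c k) * (A (k+1) - A k) := by
    rw [← httN]
    nth_rewrite 1 [← htt0]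
    rw [← intervalIntegral.sum_integral_adjacent_intervals hint]
    exact Finset.sum_congr rfl fun k hk => hpiece k (Finset.mem_range.mp hk)
  -- Abel summation
  have habel : ∑ k ∈ Finset.range N, G (c k) * (A (k+1) - A k)
      = G (c (N-1)) * A N
        - ∑ i ∈ Finset.range (N-1), (G (c (i+1)) - G (c i)) * A (i+1) := by
    have := Finset.sum_range_by_parts (fun i => G (c i)) (fun i => A (i+1) - A i) N
    simp only [smul_eq_mul] at this
    rw [this, Finset.sum_range_sub (fun i => A i), hA0, sub_zero]
    congr 1
    refine Finset.sum_congr rfl fun i _ => ?_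
    rw [Finset.sum_range_sub (fun i => A i), hA0, sub_zero]
  set P : ℝ := ∑ i ∈ Finset.range (N-1), ‖c (i+1) - c i‖ with hPdef
  have hPnn : 0 ≤ P := Finset.sum_nonneg fun i _ => norm_nonneg _
  set Q : ℝ := ‖c N - c (N-1)‖ with hQdef
  have hQnn : 0 ≤ Q := norm_nonneg _
  -- the key bound
  have hkey : |∫ s in (0:ℝ)..t, splitKernel h s * G (f s)|
      ≤ |G (c (N-1))| * |A N| + h / 2 * L * P := by
    rw [hsum, habel]
    refine le_trans (abs_sub _ _) ?_
    rw [abs_mul]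
    gcongr
    refine le_trans (Finset.abs_sum_le_sum_abs _ _) ?_
    have : h / 2 * L * P = ∑ i ∈ Finset.range (N-1), (L * ‖c (i+1) - c i‖) * (h/2) := by
      rw [hPdef, Finset.mul_sum]
      exact Finset.sum_congr rfl fun i _ => by ring
    rw [this]
    refine Finset.sum_le_sum fun i hi => ?_
    rw [abs_mul]
    have hiN : i + 1 ≤ N := by
      have := Finset.mem_range.mp hi; omega
    have hAb := hAbound (i+1) hiN
    have hAabs : |A (i+1)| ≤ h/2 := abs_le.mpr ⟨by linarith, hAb.2⟩
    exact mul_le_mul (hG _ _) hAabs (abs_nonneg _)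
      (mul_nonneg hL (norm_nonneg _))
  -- relate the Icc sum to P + Q
  have hIcc : ∑ k ∈ Finset.Icc 1 N, ‖c k - c (k - 1)‖ = P + Q := by
    rw [← Finset.Ico_add_one_right_eq_Icc, Finset.sum_Ico_eq_sum_range]
    have hre : ∀ i, ‖c (1 + i) - c (1 + i - 1)‖ = ‖c (i+1) - c i‖ := by
      intro i
      rw [show 1 + i = i + 1 from by omega, show i + 1 - 1 = i from by omega]
    have hNr : N + 1 - 1 = (N - 1) + 1 := by omega
    have hN1 : N - 1 + 1 = N := by omega
    rw [hNr, Finset.sum_congr rfl fun i _ => hre i, Finset.sum_range_succ, hN1]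
  -- the |G (c (N-1))| bound
  have hGN : |G (c (N-1))| ≤ |G (c N)| + L * Q := by
    have h1 := hG (c (N-1)) (c N)
    have h2 : |G (c (N-1))| - |G (c N)| ≤ |G (c (N-1)) - G (c N)| :=
      abs_sub_abs_le_abs_sub _ _
    rw [hQdef, norm_sub_rev]
    linarith
  have hAN := hAbound N le_rfl
  have hANabs : |A N| ≤ h/2 := abs_le.mpr ⟨by linarith [hAN.1], hAN.2⟩
  have hGcN : G (f t) = G (c N) := by rw [hft]
  constructor
  · rw [hGcN, hIcc]
    have hGnn : 0 ≤ |G (c (N-1))| := abs_nonneg _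
    calc |∫ s in (0:ℝ)..t, splitKernel h s * G (f s)|
        ≤ |G (c (N-1))| * |A N| + h / 2 * L * P := hkey
      _ ≤ (|G (c N)| + L * Q) * (h/2) + h / 2 * L * P := by
          refine add_le_add_left ?_ _
          calc |G (c (N-1))| * |A N| ≤ |G (c (N-1))| * (h/2) :=
                mul_le_mul_of_nonneg_left hANabs hGnn
            _ ≤ (|G (c N)| + L * Q) * (h/2) :=
                mul_le_mul_of_nonneg_right hGN e2.le
      _ = h / 2 * |G (c N)| + h / 2 * L * (P + Q) := by ring
  · rintro ⟨n, hn⟩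
    have hANzero : A N = 0 := by
      simp only [hAdef, hFdef, httN, hn]
      exact splitKernel_F_mul h hh n
    rw [hIcc]
    calc |∫ s in (0:ℝ)..t, splitKernel h s * G (f s)|
        ≤ |G (c (N-1))| * |A N| + h / 2 * L * P := hkey
      _ = h / 2 * L * P := by rw [hANzero, abs_zero, mul_zero, zero_add]
      _ ≤ h / 2 * L * (P + Q) := by nlinarith [mul_nonneg (mul_nonneg e2.le hL) hQnn]
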